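/- Let φ, ψ : ℂ → ℂ be entire functions and define a_n, b_n : ℂ → ℂ by a_0 = φ, a_n = a_{n-1}' + ψ·(∑_{i+j=n-2, i,j≥0} a_i a_j), and b_0 = ψ, b_n = b_{n-1}' + φ·(∑_{i+j=n-2, i,j≥0} b_i b_j) for n ≥ 1. Let R be the commutative ring of entire functions ℂ → ℂ (pointwise operations), and in the formal power series ring R[[s]] (where s plays the role of t^{-1}) set F = ∑_{n≥0} a_n s^n and G = ∑_{n≥0} b_n s^n, with ∂_x acting coefficientwise (∂_x F = ∑ a_n' s^n). Then the Riccati equations hold as identities in R[[s]]: s·∂_x F = −ψ·s²·F² + F − φ, and s·∂_x G = −φ·s²·G² + G − ψ. (Equivalently, multiplying by t² = s^{-2}: t·F_x = −ψF² + t²F − t²φ and t·G_x = −φG² + t²G − t²ψ as formal series in t^{-1}.) -/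

import Mathlib

open PowerSeries in
lemma riccati_key (φ ψ : ℂ → ℂ) (a : ℕ → ℂ → ℂ) (ha0 : a 0 = φ)
    (ha : ∀ n : ℕ, a (n + 1) =
      deriv (a n) + fun x => ψ x * ∑ k ∈ Finset.range n, a k x * a (n - 1 - k) x) :
    (X : PowerSeries (ℂ → ℂ)) * (mk fun n => deriv (a n)) =
      -(C ψ) * X ^ 2 * (mk a) ^ 2 + mk a - C φ := by
  have hre : -(C ψ) * X ^ 2 * (mk a) ^ 2
      = X ^ 2 * (-(C ψ) * (mk a * mk a)) := by ring
  rw [hre]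
  ext n
  match n with
  | 0 =>
    simp [coeff_X_pow_mul', ha0]
  | 1 =>
    have h1 := ha 0
    simp only [coeff_succ_X_mul, coeff_mk, map_add, map_sub, coeff_X_pow_mul', coeff_C]
    simp [h1]
  | (n+2) =>
    have hc : (coeff (n + 2)) (X ^ 2 * (-(C ψ) * (mk a * mk a)))
        = -(ψ * (coeff n) (mk a * mk a)) := by
      rw [show n + 2 = n + 2 from rfl,
        coeff_X_pow_mul (-(C ψ) * (mk a * mk a)) 2 n, neg_mul, map_neg, coeff_C_mul]
    rw [coeff_succ_X_mul, map_sub, map_add, hc, coeff_mul, coeff_mk, coeff_mk, ha (n+1),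
      coeff_C, if_neg (by omega)]
    simp only [Pi.add_apply, Pi.sub_apply, Pi.neg_apply, Pi.mul_apply, Pi.zero_apply,
      Finset.sum_apply, coeff_mk, Nat.add_sub_cancel]
    rw [Finset.Nat.sum_antidiagonal_eq_sum_range_succ_mk]
    simp only [Pi.mul_apply]
    ring

/-- **Proposition 2.3.** The generating functions `F = ∑ a_n s^n` and `G = ∑ b_n s^n`
(with `s = t^{-1}`) of the entries of the Hankel determinant formula formally satisfy
the Riccati equations `s ∂ₓF = −ψ s² F² + F − φ` and `s ∂ₓG = −φ s² G² + G − ψ`,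
as identities in the formal power series ring over the ring of entire functions
(realized here inside `(ℂ → ℂ)⟦X⟧` with pointwise operations on coefficients). -/
theorem generating_functions_riccati_x
    (φ ψ : ℂ → ℂ) (hφ : Differentiable ℂ φ) (hψ : Differentiable ℂ ψ)
    (a b : ℕ → ℂ → ℂ)
    (ha0 : a 0 = φ)
    (ha : ∀ n : ℕ, a (n + 1) =
      deriv (a n) + fun x => ψ x * ∑ k ∈ Finset.range n, a k x * a (n - 1 - k) x)
    (hb0 : b 0 = ψ)
    (hb : ∀ n : ℕ, b (n + 1) =
      deriv (b n) + fun x => φ x * ∑ k ∈ Finset.range n, b k x * b (n - 1 - k) x)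
    (F G Fx Gx : PowerSeries (ℂ → ℂ))
    (hF : F = PowerSeries.mk fun n => a n)
    (hG : G = PowerSeries.mk fun n => b n)
    (hFx : Fx = PowerSeries.mk fun n => deriv (a n))
    (hGx : Gx = PowerSeries.mk fun n => deriv (b n)) :
    PowerSeries.X * Fx =
        -(PowerSeries.C ψ) * PowerSeries.X ^ 2 * F ^ 2 + F - PowerSeries.C φ
      ∧
    PowerSeries.X * Gx =
        -(PowerSeries.C φ) * PowerSeries.X ^ 2 * G ^ 2 + G - PowerSeries.C ψ := by
  subst hF hG hFx hGx
  exact ⟨riccati_key φ ψ a ha0 ha, riccati_key ψ φ b hb0 hb⟩
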